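/- Every nonnegative integer n can be written as T_x + 2T_y + 4T_z for nonnegative integers x, y, z. -/

import Mathlib

/-- The `n`-th triangular number. -/
def T (n : ℕ) : ℕ := n * (n + 1) / 2

open Matrix

private lemma choose_shift (A B : ℤ) (hA : 1 ≤ A) : ∃ k : ℤ, 4*(B + k*A)^2 ≤ A^2 := by
  have hA0 : 0 < A := hA
  have h1 : 0 ≤ B % A := Int.emod_nonneg B (by positivity)
  have h2 : B % A < A := Int.emod_lt_of_pos B hA0
  have hdef : B % A = B - A * (B / A) := Int.emod_def B A
  by_cases h : 2 * (B % A) ≤ A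
  · exact ⟨-(B / A), by nlinarith [h1, h2]⟩
  · push_neg at h
    refine ⟨-(B / A) - 1, ?_⟩
    have : B + (-(B / A) - 1) * A = B % A - A := by rw [hdef]; ring
    rw [this]
    nlinarith [h1, h2]

private lemma bin_rep : ∀ N : ℕ, ∀ A B C D : ℤ, 1 ≤ A → 1 ≤ D → A ≤ (N : ℤ) →
    A*C - B^2 = D →
    ∃ x y r : ℤ, A*x^2 + 2*B*x*y + C*y^2 = r ∧ 1 ≤ r ∧ 3*r^2 ≤ 4*D := by
  intro N
  induction N using Nat.strong_induction_on with
  | _ N ih =>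
    intro A B C D hA hD hAN hdet
    obtain ⟨k, hk⟩ := choose_shift A B hA
    set B' : ℤ := B + k*A with hB'
    set C' : ℤ := C + 2*k*B + k^2*A with hC'
    have hdet' : A*C' - B'^2 = D := by rw [hB', hC']; linear_combination hdet
    have hC'pos : 1 ≤ C' := by nlinarith [sq_nonneg B']
    by_cases hle : A ≤ C'
    · refine ⟨1, 0, A, by ring, hA, ?_⟩
      nlinarith [hk]
    · push_neg at hle
      have hlt : C'.toNat < N := by
        have : (C'.toNat : ℤ) = C' := Int.toNat_of_nonneg (by linarith)
        omega
      obtain ⟨x, y, r, hq, h1, h3⟩ := ih C'.toNat hlt C' B' A D hC'pos hD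
        (le_of_eq (Int.toNat_of_nonneg (by linarith)).symm) (by linarith [hdet'])
      refine ⟨y + k*x, x, r, ?_, h1, h3⟩
      rw [hB', hC'] at hq
      linear_combination hq

private lemma bin_rep_one (A B C : ℤ) (hA : 1 ≤ A) (hdet : A*C - B^2 = 2) :
    ∃ x y : ℤ, A*x^2 + 2*B*x*y + C*y^2 = 1 := by
  obtain ⟨x, y, r, hq, h1, h3⟩ := bin_rep (A.toNat) A B C 2 hA (by norm_num)
    (le_of_eq (Int.toNat_of_nonneg (by linarith)).symm) hdet
  have : r = 1 := by nlinarith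
  exact ⟨x, y, this ▸ hq⟩

private def qf (G : Matrix (Fin 3) (Fin 3) ℤ) (v : Fin 3 → ℤ) : ℤ := v ⬝ᵥ G.mulVec v

private lemma qf_exp (G : Matrix (Fin 3) (Fin 3) ℤ) (x y z : ℤ) :
    qf G ![x, y, z] = G 0 0*x^2 + (G 0 1 + G 1 0)*x*y + (G 0 2 + G 2 0)*x*z
      + G 1 1*y^2 + (G 1 2 + G 2 1)*y*z + G 2 2*z^2 := by
  simp [qf, Matrix.mulVec, dotProduct, Fin.sum_univ_three]
  ring

private lemma qf_smul (G : Matrix (Fin 3) (Fin 3) ℤ) (c : ℤ) (v : Fin 3 → ℤ) :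
    qf G (c • v) = c^2 * qf G v := by
  simp [qf, Matrix.mulVec, dotProduct, Fin.sum_univ_three, Pi.smul_apply, smul_eq_mul]
  ring

private lemma qf_transform (G U : Matrix (Fin 3) (Fin 3) ℤ) (v : Fin 3 → ℤ) :
    qf (Uᵀ * G * U) v = qf G (U.mulVec v) := by
  simp only [qf, Matrix.mul_assoc, ← Matrix.mulVec_mulVec, dotProduct_mulVec,
    Matrix.vecMul_transpose]

private lemma mulVec_ne (U : Matrix (Fin 3) (Fin 3) ℤ) (hU : IsUnit U.det)
    (v : Fin 3 → ℤ) (hv : v ≠ 0) : U.mulVec v ≠ 0 := by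
  haveI := U.invertibleOfIsUnitDet hU
  intro h
  apply hv
  calc v = (⅟U * U).mulVec v := by rw [invOf_mul_self, Matrix.one_mulVec]
  _ = (⅟U).mulVec (U.mulVec v) := (Matrix.mulVec_mulVec v (⅟U) U).symm
  _ = 0 := by rw [h, Matrix.mulVec_zero]

private lemma complete3 (x y z : ℤ) (h : Int.gcd (Int.gcd x y : ℤ) z = 1) :
    ∃ U : Matrix (Fin 3) (Fin 3) ℤ, IsUnit U.det ∧ U.mulVec ![1,0,0] = ![x,y,z] := by
  by_cases hg : Int.gcd x y = 0
  · obtain ⟨hx, hy⟩ := Int.gcd_eq_zero_iff.mp hg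
    have hz : z = 1 ∨ z = -1 := by
      have : z.natAbs = 1 := by simpa [hg] using h
      rcases Int.natAbs_eq z with h' | h' <;> omega
    refine ⟨!![0,0,1; 0,1,0; z,0,0], ?_, ?_⟩
    · have : (!![0,0,1; 0,1,0; z,0,0] : Matrix (Fin 3) (Fin 3) ℤ).det = -z := by
        simp [Matrix.det_fin_three]
      rw [this, Int.isUnit_iff]; omega
    · funext i; fin_cases i <;> simp [Matrix.mulVec, dotProduct, Fin.sum_univ_three,
        hx, hy]
  · set G1 : ℤ := (Int.gcd x y : ℤ) with hG1
    have hG1ne : G1 ≠ 0 := by simpa [hG1] using hg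
    have hxd : G1 ∣ x := Int.gcd_dvd_left _ _
    have hyd : G1 ∣ y := Int.gcd_dvd_right _ _
    set α : ℤ := Int.gcdA x y
    set bb : ℤ := Int.gcdB x y
    have hbez : G1 = x*α + y*bb := Int.gcd_eq_gcd_ab x y
    set x' : ℤ := x / G1 with hx'
    set y' : ℤ := y / G1 with hy'
    have hxe : x = G1 * x' := (Int.mul_ediv_cancel' hxd).symm
    have hye : y = G1 * y' := (Int.mul_ediv_cancel' hyd).symm
    have h2 : x'*α + y'*bb = 1 := by
      have : G1 * (x'*α + y'*bb) = G1 * 1 := by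
        rw [mul_one]; rw [hxe, hye] at hbez; linarith [hbez]
      exact mul_left_cancel₀ hG1ne this
    set lam : ℤ := Int.gcdA G1 z
    set mu : ℤ := Int.gcdB G1 z
    have hbez2 : (1 : ℤ) = G1 * lam + z * mu := by
      have := Int.gcd_eq_gcd_ab G1 z
      rw [h] at this; exact_mod_cast this
    refine ⟨!![x, -bb, -mu*x'; y, α, -mu*y'; z, 0, lam], ?_, ?_⟩
    · have hdet : (!![x, -bb, -mu*x'; y, α, -mu*y'; z, 0, lam] :
          Matrix (Fin 3) (Fin 3) ℤ).det = 1 := by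
        simp [Matrix.det_fin_three]
        linear_combination (-lam) * hbez + (mu*z) * h2 - hbez2
      rw [hdet]; exact isUnit_one
    · funext i; fin_cases i <;> simp [Matrix.mulVec, dotProduct, Fin.sum_univ_three]

/-- Any positive definite integral ternary quadratic form of determinant 2 represents 1. -/
private lemma aux1 (A r : ℤ) (hA2 : 2 ≤ A) (hr1 : 1 ≤ r) (hr3 : 3*r^2 ≤ 8*A) :
    4*r < 3*A^2 := by
  by_contra h4
  push_neg at h4
  have c1 : 9*A^4 ≤ 16*r^2 := by nlinarith [sq_nonneg A]
  have c2 : 27*A^4 ≤ 128*A := by nlinarith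
  have hA3 : 8 ≤ A^3 := by nlinarith
  have c3 : 216*A ≤ 27*A^4 := by nlinarith
  linarith

private lemma aux2 (A μ s r : ℤ) (hA2 : 2 ≤ A) (hkey : A*μ = s^2 + r) (hs : 4*s^2 ≤ A^2)
    (h4r : 4*r < 3*A^2) : μ < A := by
  have h5 : (4*A)*μ < (4*A)*A := by nlinarith
  exact (mul_lt_mul_iff_right₀ (show (0:ℤ) < 4*A by linarith)).mp h5

private lemma aux3 (d μ μ' A : ℤ) (hd : 1 ≤ d) (h : μ = d^2*μ') (hμ' : 1 ≤ μ')
    (hμA : μ < A) : μ' < A := by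
  have hd2 : 1 ≤ d^2 := by nlinarith
  have : μ' ≤ μ := by nlinarith
  linarith

private lemma aux4 (D2 A q : ℤ) (hA : 1 ≤ A) (hq : 1 ≤ q) (e : A*q = D2*A^2) : 1 ≤ D2 := by
  by_contra h
  push_neg at h
  have h1 : 0 < A*q := mul_pos (by linarith) (by linarith)
  nlinarith [h1, sq_nonneg A]

set_option maxHeartbeats 1000000 in
private lemma M3 : ∀ N : ℕ, ∀ G : Matrix (Fin 3) (Fin 3) ℤ, Gᵀ = G → G.det = 2 →
    (∀ v : Fin 3 → ℤ, v ≠ 0 → 1 ≤ qf G v) → G 0 0 ≤ (N : ℤ) →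
    ∃ v : Fin 3 → ℤ, qf G v = 1 := by
  intro N
  induction N with
  | zero =>
    intro G hsym hdet hpos hN
    exfalso
    have h1 : (1:ℤ) ≤ qf G ![1,0,0] := hpos _ (fun h => by simpa using congrFun h 0)
    have h2 : qf G ![1,0,0] = G 0 0 := by rw [qf_exp]; ring
    rw [h2] at h1
    norm_num at hN
    linarith
  | succ N ih =>
    intro G hsym hdet hpos hN
    have s01 : G 0 1 = G 1 0 := by simpa using congrFun (congrFun hsym 1) 0
    have s02 : G 0 2 = G 2 0 := by simpa using congrFun (congrFun hsym 2) 0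
    have s12 : G 1 2 = G 2 1 := by simpa using congrFun (congrFun hsym 2) 1
    set A := G 0 0 with hAdef
    have hqe1 : qf G ![1,0,0] = A := by rw [qf_exp]; ring
    have hA1 : 1 ≤ A := by
      have := hpos ![1,0,0] (fun h => by simpa using congrFun h 0)
      rwa [hqe1] at this
    by_cases hA : A = 1
    · exact ⟨![1,0,0], by rw [hqe1, hA]⟩
    have hA2 : 2 ≤ A := by omega
    set g01 := G 0 1
    set g02 := G 0 2
    set g11 := G 1 1
    set g12 := G 1 2
    set g22 := G 2 2
    have hexp : ∀ x y z : ℤ, qf G ![x,y,z]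
        = A*x^2 + 2*g01*x*y + 2*g02*x*z + g11*y^2 + 2*g12*y*z + g22*z^2 := by
      intro x y z
      rw [qf_exp, ← s01, ← s02, ← s12]; ring
    set D2 : ℤ := A*g11 - g01^2 with hD2def
    set E : ℤ := A*g12 - g01*g02 with hEdef
    set F : ℤ := A*g22 - g02^2 with hFdef
    have hkey : ∀ x y z : ℤ, A * qf G ![x,y,z]
        = (A*x + g01*y + g02*z)^2 + (D2*y^2 + 2*E*y*z + F*z^2) := by
      intro x y z
      rw [hexp, hD2def, hEdef, hFdef]; ring
    have hdet3 : D2*F - E^2 = 2*A := by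
      rw [Matrix.det_fin_three, ← s01, ← s02, ← s12] at hdet
      rw [hD2def, hEdef, hFdef]
      linear_combination A * hdet
    have hD2 : 1 ≤ D2 := by
      have hwne : (![(-g01 : ℤ), A, 0]) ≠ 0 := fun h => by
        have := congrFun h 1; simp at this; omega
      have h1 := hpos _ hwne
      have e : A * qf G ![-g01, A, 0] = D2*A^2 := by rw [hkey]; ring
      exact aux4 D2 A _ hA1 h1 e
    obtain ⟨y0, z0, r, hq, hr1, hr3⟩ := bin_rep D2.toNat D2 E F (2*A) hD2 (by linarith)
      (le_of_eq (Int.toNat_of_nonneg (by linarith)).symm) hdet3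
    obtain ⟨k, hk⟩ := choose_shift A (g01*y0 + g02*z0) hA1
    have hyz : ¬(y0 = 0 ∧ z0 = 0) := by
      rintro ⟨rfl, rfl⟩
      simp at hq
      omega
    have hwne : (![k, y0, z0]) ≠ 0 := by
      intro h
      exact hyz ⟨by simpa using congrFun h 1, by simpa using congrFun h 2⟩
    set μ := qf G ![k, y0, z0] with hμdef
    have hμ1 : 1 ≤ μ := hpos _ hwne
    have hμkey : A*μ = (A*k + g01*y0 + g02*z0)^2 + r := by
      rw [hμdef, hkey k y0 z0, hq]
    have h4r : 4*r < 3*A^2 := aux1 A r hA2 hr1 (by linarith)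
    have hs : 4*(A*k + g01*y0 + g02*z0)^2 ≤ A^2 := by
      have e : A*k + (g01*y0 + g02*z0) = (g01*y0 + g02*z0) + k*A := by ring
      calc 4*(A*k + g01*y0 + g02*z0)^2 = 4*((g01*y0 + g02*z0) + k*A)^2 := by ring
      _ ≤ A^2 := hk
    have hμA : μ < A := aux2 A μ _ r hA2 hμkey hs h4r
    -- make the vector primitive
    set d : ℕ := Int.gcd (Int.gcd k y0 : ℤ) z0 with hddef
    have hdne : d ≠ 0 := by
      intro h0
      obtain ⟨hin, hz0⟩ := Int.gcd_eq_zero_iff.mp h0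
      have : Int.gcd k y0 = 0 := by exact_mod_cast hin
      obtain ⟨hk0, hy0⟩ := Int.gcd_eq_zero_iff.mp this
      exact hyz ⟨hy0, hz0⟩
    have hd1 : 1 ≤ (d:ℤ) := by exact_mod_cast Nat.one_le_iff_ne_zero.mpr hdne
    have hdk : (d:ℤ) ∣ k := dvd_trans (Int.gcd_dvd_left _ _) (Int.gcd_dvd_left _ _)
    have hdy : (d:ℤ) ∣ y0 := dvd_trans (Int.gcd_dvd_left _ _) (Int.gcd_dvd_right _ _)
    have hdz : (d:ℤ) ∣ z0 := Int.gcd_dvd_right _ _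
    set k' := k / (d:ℤ) with hk'def
    set y' := y0 / (d:ℤ) with hy'def
    set z' := z0 / (d:ℤ) with hz'def
    have hke : k = (d:ℤ) * k' := (Int.mul_ediv_cancel' hdk).symm
    have hye : y0 = (d:ℤ) * y' := (Int.mul_ediv_cancel' hdy).symm
    have hze : z0 = (d:ℤ) * z' := (Int.mul_ediv_cancel' hdz).symm
    have hsmul : ((d:ℤ) • ![k', y', z']) = ![k, y0, z0] := by
      funext i; fin_cases i <;>
        simp [Pi.smul_apply, smul_eq_mul, ← hke, ← hye, ← hze]
    set μ' := qf G ![k', y', z'] with hμ'def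
    have hμfac : μ = (d:ℤ)^2 * μ' := by
      rw [hμdef, ← hsmul, qf_smul, hμ'def]
    have hw'ne : (![k', y', z']) ≠ 0 := by
      intro h
      apply hwne
      rw [← hsmul, h, smul_zero]
    have hμ'1 : 1 ≤ μ' := hpos _ hw'ne
    have hμ'A : μ' < A := aux3 (d:ℤ) μ μ' A hd1 hμfac hμ'1 hμA
    have hprim : Int.gcd (Int.gcd k' y' : ℤ) z' = 1 := by
      have e1 : Int.gcd k y0 = d * Int.gcd k' y' := by
        rw [hke, hye, Int.gcd_mul_left]
        simp
      have e2 : d = d * Int.gcd (Int.gcd k' y' : ℤ) z' := by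
        conv_lhs => rw [hddef, hze, e1]
        push_cast
        rw [Int.gcd_mul_left]
        simp
      have h' : d * 1 = d * (Int.gcd (Int.gcd k' y' : ℤ) z') := by rw [mul_one]; exact e2
      exact (Nat.eq_of_mul_eq_mul_left (Nat.pos_of_ne_zero hdne) h').symm
    obtain ⟨U, hU, hcol⟩ := complete3 k' y' z' hprim
    set G' := Uᵀ * G * U with hG'def
    have hsym' : G'ᵀ = G' := by
      rw [hG'def]
      simp [Matrix.transpose_mul, Matrix.mul_assoc, hsym]
    have hdet' : G'.det = 2 := by
      rw [hG'def, Matrix.det_mul, Matrix.det_mul, Matrix.det_transpose, hdet]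
      rcases Int.isUnit_iff.mp hU with h | h <;> rw [h] <;> ring
    have hpos' : ∀ v : Fin 3 → ℤ, v ≠ 0 → 1 ≤ qf G' v := by
      intro v hv
      rw [hG'def, qf_transform]
      exact hpos _ (mulVec_ne U hU v hv)
    have hG'00 : G' 0 0 = μ' := by
      have h1 : qf G' ![1,0,0] = G' 0 0 := by rw [qf_exp]; ring
      rw [← h1, hG'def, qf_transform, hcol, hμ'def]
    have hN' : G' 0 0 ≤ (N:ℤ) := by
      rw [hG'00]
      push_cast at hN
      omega
    obtain ⟨v', hv'⟩ := ih G' hsym' hdet' hpos' hN'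
    refine ⟨U.mulVec v', ?_⟩
    rw [← qf_transform, ← hG'def]
    exact hv'

private def bf (G : Matrix (Fin 3) (Fin 3) ℤ) (v w : Fin 3 → ℤ) : ℤ := v ⬝ᵥ G.mulVec w

private lemma bf_symm {G : Matrix (Fin 3) (Fin 3) ℤ} (hsym : Gᵀ = G) (v w : Fin 3 → ℤ) :
    bf G v w = bf G w v := by
  have s01 : G 0 1 = G 1 0 := by simpa using congrFun (congrFun hsym 1) 0
  have s02 : G 0 2 = G 2 0 := by simpa using congrFun (congrFun hsym 2) 0
  have s12 : G 1 2 = G 2 1 := by simpa using congrFun (congrFun hsym 2) 1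
  simp [bf, Matrix.mulVec, dotProduct, Fin.sum_univ_three]
  rw [← s01, ← s02, ← s12]
  ring

private lemma bf_sub_right (G : Matrix (Fin 3) (Fin 3) ℤ) (x y z : Fin 3 → ℤ) (c : ℤ) :
    bf G x (y - c • z) = bf G x y - c * bf G x z := by
  simp [bf, Matrix.mulVec, dotProduct, Fin.sum_univ_three, Pi.smul_apply,
    Pi.sub_apply, smul_eq_mul]
  ring

private lemma qf_eq_bf (G : Matrix (Fin 3) (Fin 3) ℤ) (v : Fin 3 → ℤ) : qf G v = bf G v v := rfl

private lemma qf_split (G : Matrix (Fin 3) (Fin 3) ℤ) (x y : Fin 3 → ℤ) (c : ℤ) :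
    qf G (x + c • y) = qf G x + c * bf G x y + c * bf G y x + c^2 * qf G y := by
  simp [qf, bf, Matrix.mulVec, dotProduct, Fin.sum_univ_three, Pi.smul_apply,
    Pi.add_apply, smul_eq_mul]
  ring

private lemma qf_two (G : Matrix (Fin 3) (Fin 3) ℤ) (x y : Fin 3 → ℤ) (s t : ℤ) :
    qf G (s • x + t • y) = s^2 * qf G x + s*t * bf G x y + s*t * bf G y x + t^2 * qf G y := by
  simp [qf, bf, Matrix.mulVec, dotProduct, Fin.sum_univ_three, Pi.smul_apply,
    Pi.add_apply, smul_eq_mul]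
  ring

private lemma bf_two_left (G : Matrix (Fin 3) (Fin 3) ℤ) (x y z : Fin 3 → ℤ) (s t : ℤ) :
    bf G (s • x + t • y) z = s * bf G x z + t * bf G y z := by
  simp [bf, Matrix.mulVec, dotProduct, Fin.sum_univ_three, Pi.smul_apply,
    Pi.add_apply, smul_eq_mul]
  ring

private def col3 (a b c : Fin 3 → ℤ) : Matrix (Fin 3) (Fin 3) ℤ :=
  Matrix.of fun i j => ![a, b, c] j i

private lemma gram3 (G : Matrix (Fin 3) (Fin 3) ℤ) (a b c : Fin 3 → ℤ) :
    (col3 a b c)ᵀ * G * (col3 a b c) =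
      !![bf G a a, bf G a b, bf G a c; bf G b a, bf G b b, bf G b c;
         bf G c a, bf G c b, bf G c c] := by
  ext i j
  fin_cases i <;> fin_cases j <;>
    simp [col3, bf, Matrix.mul_apply, Matrix.mulVec, dotProduct,
      Fin.sum_univ_three] <;> ring

private lemma vec3_eta (v : Fin 3 → ℤ) : ![v 0, v 1, v 2] = v := by
  funext i; fin_cases i <;> simp

set_option maxHeartbeats 1000000 in
/-- Any symmetric positive definite integral matrix of determinant 2 has its
(0,0) entry of the form α² + β² + 2γ². -/
private lemma CL (G : Matrix (Fin 3) (Fin 3) ℤ) (hsym : Gᵀ = G) (hdet : G.det = 2)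
    (hpos : ∀ v : Fin 3 → ℤ, v ≠ 0 → 1 ≤ qf G v) :
    ∃ α β γ : ℤ, G 0 0 = α^2 + β^2 + 2*γ^2 := by
  have hqe1 : qf G ![1,0,0] = G 0 0 := by rw [qf_exp]; ring
  have hG00 : 1 ≤ G 0 0 := by
    have := hpos ![1,0,0] (fun h => by simpa using congrFun h 0)
    rwa [hqe1] at this
  obtain ⟨v, hv⟩ := M3 (G 0 0).toNat G hsym hdet hpos
    (le_of_eq (Int.toNat_of_nonneg (by linarith)).symm)
  -- v is primitive
  set d : ℕ := Int.gcd (Int.gcd (v 0) (v 1)) (v 2) with hddef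
  have hdk : (d:ℤ) ∣ v 0 := dvd_trans (Int.gcd_dvd_left _ _) (Int.gcd_dvd_left _ _)
  have hdy : (d:ℤ) ∣ v 1 := dvd_trans (Int.gcd_dvd_left _ _) (Int.gcd_dvd_right _ _)
  have hdz : (d:ℤ) ∣ v 2 := Int.gcd_dvd_right _ _
  have hsm : (d:ℤ) • ![v 0/(d:ℤ), v 1/(d:ℤ), v 2/(d:ℤ)] = v := by
    have e0 := Int.mul_ediv_cancel' hdk
    have e1 := Int.mul_ediv_cancel' hdy
    have e2 := Int.mul_ediv_cancel' hdz
    funext i; fin_cases i <;> simp [Pi.smul_apply, smul_eq_mul] <;> assumption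
  have hfac := qf_smul G (d:ℤ) ![v 0/(d:ℤ), v 1/(d:ℤ), v 2/(d:ℤ)]
  rw [hsm, hv] at hfac
  have hd1 : (d:ℤ) = 1 := by
    have hdvd : (d:ℤ) ∣ 1 :=
      dvd_trans (dvd_pow_self (d:ℤ) two_ne_zero) ⟨_, hfac⟩
    have := Int.isUnit_iff.mp (isUnit_of_dvd_one hdvd)
    omega
  have hprim : Int.gcd (Int.gcd (v 0) (v 1) : ℤ) (v 2) = 1 := by exact_mod_cast hd1
  obtain ⟨U1, hU1, hcol⟩ := complete3 (v 0) (v 1) (v 2) hprim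
  have hcolv : U1.mulVec ![1,0,0] = v := by rw [hcol, vec3_eta]
  have hvi : ∀ i, U1 i 0 = v i := fun i => by
    have := congrFun hcolv i
    simpa [Matrix.mulVec, dotProduct, Fin.sum_univ_three] using this
  set c1 : Fin 3 → ℤ := fun i => U1 i 1 with hc1def
  set c2 : Fin 3 → ℤ := fun i => U1 i 2 with hc2def
  set p := bf G v c1 with hpdef
  set q := bf G v c2 with hqdef
  set w1 : Fin 3 → ℤ := c1 - p • v with hw1def
  set w2 : Fin 3 → ℤ := c2 - q • v with hw2def
  have hbvv : bf G v v = 1 := hv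
  have horth1 : bf G v w1 = 0 := by
    rw [hw1def, bf_sub_right, hbvv]; rw [hpdef]; ring
  have horth2 : bf G v w2 = 0 := by
    rw [hw2def, bf_sub_right, hbvv]; rw [hqdef]; ring
  have hw1i : ∀ i, w1 i = U1 i 1 - p * U1 i 0 := by
    intro i
    rw [hw1def]; simp [Pi.sub_apply, Pi.smul_apply, smul_eq_mul, hc1def, hvi i]
  have hw2i : ∀ i, w2 i = U1 i 2 - q * U1 i 0 := by
    intro i
    rw [hw2def]; simp [Pi.sub_apply, Pi.smul_apply, smul_eq_mul, hc2def, hvi i]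
  have hw1mv : U1.mulVec ![-p, 1, 0] = w1 := by
    funext i
    rw [hw1i i]
    simp only [Matrix.mulVec, dotProduct, Fin.sum_univ_three, Matrix.cons_val_zero, Matrix.cons_val_one, Matrix.head_cons, Matrix.cons_val_two, Matrix.tail_cons, mul_zero, mul_one, add_zero, zero_add]
    ring
  have hw2mv : U1.mulVec ![-q, 0, 1] = w2 := by
    funext i
    rw [hw2i i]
    simp only [Matrix.mulVec, dotProduct, Fin.sum_univ_three, Matrix.cons_val_zero, Matrix.cons_val_one, Matrix.head_cons, Matrix.cons_val_two, Matrix.tail_cons, mul_zero, mul_one, add_zero, zero_add]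
    ring
  have hw1ne : w1 ≠ 0 := by
    rw [← hw1mv]
    exact mulVec_ne U1 hU1 _ (fun h => by simpa using congrFun h 1)
  set A2 := qf G w1 with hA2def
  set B2 := bf G w1 w2 with hB2def
  set C2 := qf G w2 with hC2def
  have hA2pos : 1 ≤ A2 := hpos w1 hw1ne
  -- determinant of the binary complement
  have hdetW0 : (col3 v w1 w2).det = U1.det := by
    rw [Matrix.det_fin_three, Matrix.det_fin_three]
    simp only [col3, Matrix.of_apply, Matrix.cons_val_zero, Matrix.cons_val_one,
      Matrix.head_cons, Matrix.cons_val_two, Matrix.tail_cons]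
    rw [hw1i 0, hw1i 1, hw1i 2, hw2i 0, hw2i 1, hw2i 2, ← hvi 0, ← hvi 1, ← hvi 2]
    ring
  have hflip1 : bf G w1 v = 0 := by rw [bf_symm hsym]; exact horth1
  have hflip2 : bf G w2 v = 0 := by rw [bf_symm hsym]; exact horth2
  have hflipB : bf G w2 w1 = B2 := by rw [bf_symm hsym]
  have hA2' : bf G w1 w1 = A2 := by rw [← qf_eq_bf]
  have hC2' : bf G w2 w2 = C2 := by rw [← qf_eq_bf]
  have hgram : (col3 v w1 w2)ᵀ * G * (col3 v w1 w2) = !![1,0,0; 0,A2,B2; 0,B2,C2] := by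
    rw [gram3, hbvv, horth1, horth2, hflip1, hflip2, hflipB, hA2', hC2', ← hB2def]
  have hdet2 : A2*C2 - B2^2 = 2 := by
    have h1 : ((col3 v w1 w2)ᵀ * G * (col3 v w1 w2)).det
        = (col3 v w1 w2).det^2 * 2 := by
      rw [Matrix.det_mul, Matrix.det_mul, Matrix.det_transpose, hdet]; ring
    have h2 : (!![1,0,0; 0,A2,B2; 0,B2,C2] : Matrix (Fin 3) (Fin 3) ℤ).det
        = A2*C2 - B2^2 := by simp [Matrix.det_fin_three]; ring
    rw [hgram, h2] at h1
    have hU1sq : U1.det^2 = 1 := by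
      rcases Int.isUnit_iff.mp hU1 with h | h <;> rw [h] <;> ring
    rw [h1, hdetW0, hU1sq, one_mul]
  obtain ⟨s, t, hst⟩ := bin_rep_one A2 B2 C2 hA2pos hdet2
  set b1 : Fin 3 → ℤ := s • w1 + t • w2 with hb1def
  have hqb1 : qf G b1 = 1 := by
    rw [hb1def, qf_two, hflipB, ← hA2def, ← hB2def, ← hC2def]
    linear_combination hst
  have hvb1 : bf G v b1 = 0 := by
    rw [bf_symm hsym, hb1def, bf_two_left, hflip1, hflip2]; ring
  -- final assembly
  set e1 : Fin 3 → ℤ := ![1,0,0] with he1def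
  set α := bf G v e1 with hαdef
  set u : Fin 3 → ℤ := e1 - α • v with hudef
  have hvu : bf G v u = 0 := by rw [hudef, bf_sub_right, hbvv, hαdef]; ring
  set β := bf G b1 u with hβdef
  set u' : Fin 3 → ℤ := u - β • b1 with hu'def
  have hb1b1 : bf G b1 b1 = 1 := hqb1
  have hb1u' : bf G b1 u' = 0 := by rw [hu'def, bf_sub_right, hb1b1, hβdef]; ring
  have hvu' : bf G v u' = 0 := by rw [hu'def, bf_sub_right, hvu, hvb1]; ring
  set γ := (col3 v b1 u').det with hγdef
  have hflipv : bf G u' v = 0 := by rw [bf_symm hsym]; exact hvu'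
  have hflipb : bf G u' b1 = 0 := by rw [bf_symm hsym]; exact hb1u'
  have hflipvb : bf G b1 v = 0 := by rw [bf_symm hsym]; exact hvb1
  have hgram' : (col3 v b1 u')ᵀ * G * (col3 v b1 u')
      = !![1,0,0; 0,1,0; 0,0,qf G u'] := by
    rw [gram3, hbvv, hvb1, hvu', hflipvb, hb1b1, hb1u', hflipv, hflipb, ← qf_eq_bf]
  have hqu' : qf G u' = 2*γ^2 := by
    have h1 : ((col3 v b1 u')ᵀ * G * (col3 v b1 u')).det
        = (col3 v b1 u').det^2 * 2 := by
      rw [Matrix.det_mul, Matrix.det_mul, Matrix.det_transpose, hdet]; ring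
    have h2 : (!![1,0,0; 0,1,0; 0,0,qf G u'] : Matrix (Fin 3) (Fin 3) ℤ).det
        = qf G u' := by simp [Matrix.det_fin_three]
    rw [hgram', h2] at h1
    rw [h1, hγdef]; ring
  have hue1 : u + α • v = e1 := by rw [hudef]; exact sub_add_cancel e1 (α • v)
  have hq1 : qf G e1 = qf G u + α^2 := by
    rw [← hue1, qf_split, hvu, hv]
    have huv : bf G u v = 0 := by rw [bf_symm hsym]; exact hvu
    rw [huv]; ring
  have hq2 : qf G u = qf G u' + β^2 := by
    have hu'b : u' + β • b1 = u := by rw [hu'def]; exact sub_add_cancel u (β • b1)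
    rw [← hu'b, qf_split, hb1u', hflipb, hqb1]; ring
  refine ⟨α, β, γ, ?_⟩
  rw [← hqe1, hq1, hq2, hqu']
  ring

private lemma aux5 (p m x y z b : ℤ) (hp : 1 ≤ p) (hm : 1 ≤ m)
    (hsum : 2*p*(m*x + y - b*z)^2 + (2*p*y + b*z)^2 + 2*m*z^2 ≤ 0) :
    x = 0 ∧ y = 0 ∧ z = 0 := by
  have hA : 0 ≤ 2*p*(m*x + y - b*z)^2 := mul_nonneg (by linarith) (sq_nonneg _)
  have hB : 0 ≤ (2*p*y + b*z)^2 := sq_nonneg _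
  have hC : 0 ≤ 2*m*z^2 := mul_nonneg (by linarith) (sq_nonneg _)
  have hz : z = 0 := by
    have h1 : 2*m*z^2 = 0 := le_antisymm (by linarith) hC
    rcases mul_eq_zero.mp h1 with h | h
    · linarith
    · exact pow_eq_zero_iff two_ne_zero |>.mp h
  subst hz
  have hy : y = 0 := by
    have h1 : (2*p*y + b*0)^2 = 0 := le_antisymm (by linarith) hB
    have h2 := pow_eq_zero_iff two_ne_zero |>.mp h1
    have h3 : (2*p)*y = 0 := by linear_combination h2
    rcases mul_eq_zero.mp h3 with h | h
    · linarith
    · exact h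
  subst hy
  have hx : x = 0 := by
    have h1 : 2*p*(m*x + 0 - b*0)^2 = 0 := le_antisymm (by linarith) hA
    rcases mul_eq_zero.mp h1 with h | h
    · linarith
    · have h2 := pow_eq_zero_iff two_ne_zero |>.mp h
      have h3 : m*x = 0 := by linear_combination h2
      rcases mul_eq_zero.mp h3 with h' | h'
      · linarith
      · exact h'
  exact ⟨hx, rfl, rfl⟩

/-- Every squarefree `m ≡ 7 (mod 8)` is of the form `α² + β² + 2γ²`. -/
private lemma sqfree_rep (m : ℕ) (hm7 : m % 8 = 7) :
    ∃ α β γ : ℤ, (m:ℤ) = α^2 + β^2 + 2*γ^2 := by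
  have hm1 : 7 ≤ m := by omega
  have hmodd : Odd m := Nat.odd_iff.mpr (by omega)
  have hco2 : Nat.Coprime 2 m := Nat.coprime_two_left.mpr hmodd
  have hco8 : Nat.Coprime 8 m := by
    have h8 : (8:ℕ) = 2^3 := by norm_num
    rw [h8]; exact Nat.Coprime.pow_left _ hco2
  haveI : NeZero (8*m) := ⟨by positivity⟩
  set crt := ZMod.chineseRemainder hco8 with hcrt
  set u2 : (ZMod m)ˣ := ZMod.unitOfCoprime 2 hco2 with hu2
  set am : ZMod m := ((-(u2⁻¹) : (ZMod m)ˣ) : ZMod m) with ham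
  set a : ZMod (8*m) := crt.symm (5, am) with ha
  have haunit : IsUnit a := by
    apply IsUnit.of_mul_eq_one (a := a) (crt.symm (5, ((-u2 : (ZMod m)ˣ) : ZMod m)))
    rw [ha, ← RingEquiv.map_mul]
    have h1 : ((5 : ZMod 8) * 5) = 1 := by decide
    have h2 : (am * ((-u2 : (ZMod m)ˣ) : ZMod m)) = 1 := by
      rw [ham, Units.val_neg, Units.val_neg, neg_mul_neg, ← Units.val_mul,
        inv_mul_cancel, Units.val_one]
    rw [Prod.mk_mul_mk, h1, h2]
    exact map_one _
  obtain ⟨p, hpgt, hpp, hpe⟩ := Nat.forall_exists_prime_gt_and_eq_mod haunit (8*m)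
  have hmap := congrArg crt hpe
  rw [ha, RingEquiv.apply_symm_apply, map_natCast] at hmap
  have h8 : (p : ZMod 8) = 5 := by
    have := congrArg Prod.fst hmap; simpa using this
  have hmm : (p : ZMod m) = am := by
    have := congrArg Prod.snd hmap; simpa using this
  have hp8 : p % 8 = 5 := by
    have h5 : ((p:ℕ) : ZMod 8) = ((5:ℕ) : ZMod 8) := by exact_mod_cast h8
    have := (ZMod.natCast_eq_natCast_iff p 5 8).mp h5
    unfold Nat.ModEq at this
    omega
  have hp4 : p % 4 = 1 := by omega
  have hp2 : p % 2 = 1 := by omega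
  have hpodd : Odd p := Nat.odd_iff.mpr hp2
  have hppos : 1 ≤ p := by omega
  -- 2p ≡ -1 (mod m)
  have h2pm : ((2*p : ℕ) : ZMod m) = -1 := by
    push_cast
    rw [hmm, ham, Units.val_neg, mul_neg]
    have hu2v : ((u2 : (ZMod m)ˣ) : ZMod m) = (2 : ZMod m) := by
      rw [hu2, ZMod.coe_unitOfCoprime]; push_cast; ring
    rw [← hu2v, ← Units.val_mul, mul_inv_cancel, Units.val_one]
  have hdvd2p1 : (m:ℤ) ∣ 2*(p:ℤ) + 1 := by
    have h0 : ((2*p+1 : ℕ) : ZMod m) = 0 := by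
      push_cast
      push_cast at h2pm
      rw [h2pm]; ring
    have hnat : m ∣ 2*p+1 := (ZMod.natCast_eq_zero_iff _ m).mp h0
    have hint := Int.natCast_dvd_natCast.mpr hnat
    push_cast at hint
    exact hint
  -- Legendre symbol computation
  haveI hfact : Fact p.Prime := ⟨hpp⟩
  have hJ2 : jacobiSym (-2) p = -1 := by
    rw [jacobiSym.at_neg_two hpodd, ZMod.χ₈'_nat_eq_if_mod_eight]
    norm_num [hp8, hp2]
  have hgcd2m : Int.gcd 2 m = 1 := by
    have : ((2:ℤ)) = ((2:ℕ):ℤ) := by norm_num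
    rw [this, Int.gcd_natCast_natCast]
    exact hco2
  have hJ4 : jacobiSym (4:ℤ) m = 1 := by
    have h4 : ((4:ℤ)) = (2:ℤ)^2 := by norm_num
    rw [h4, jacobiSym.sq_one' hgcd2m]
  have hmod4p : ((4*(p:ℤ)) % (m:ℤ) = (-2 : ℤ) % (m:ℤ)) := by
    have hdvd : (m:ℤ) ∣ (-2) - 4*(p:ℤ) := by
      have he : (-2) - 4*(p:ℤ) = (-2)*(2*(p:ℤ)+1) := by ring
      rw [he]
      exact Dvd.dvd.mul_left hdvd2p1 (-2)
    exact Int.modEq_iff_dvd.mpr hdvd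
  have hJ4p : jacobiSym (4*(p:ℤ)) m = jacobiSym (-2) m := jacobiSym.mod_left' hmod4p
  have hmoddO : Odd m := hmodd
  have hJneg2m : jacobiSym (-2:ℤ) m = -1 := by
    rw [jacobiSym.at_neg_two hmoddO, ZMod.χ₈'_nat_eq_if_mod_eight]
    have : m % 2 = 1 := by omega
    norm_num [hm7, this]
  have hJpm : jacobiSym ((p:ℕ):ℤ) m = -1 := by
    have hmul : jacobiSym (4*(p:ℤ)) m = jacobiSym (4:ℤ) m * jacobiSym ((p:ℕ):ℤ) m := jacobiSym.mul_left 4 (p:ℤ) m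
    rw [hJ4p, hJneg2m, hJ4, one_mul] at hmul
    omega
  have hJmp : jacobiSym ((m:ℕ):ℤ) p = -1 := by
    have hqr := jacobiSym.quadratic_reciprocity_one_mod_four hp4 hmoddO
    rw [← hqr]
    exact hJpm
  have hleg : legendreSym p (-2 * (m:ℤ)) = 1 := by
    rw [jacobiSym.legendreSym.to_jacobiSym, jacobiSym.mul_left, hJ2, hJmp]
    norm_num
  -- a square root of -2m mod p
  have hpm8 : 8*m < p := hpgt
  have hndvd : ¬ (p:ℤ) ∣ (-2 * (m:ℤ)) := by
    intro hdvd
    have h1 : (p:ℤ) ∣ ((2*m : ℕ) : ℤ) := by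
      push_cast
      have := (dvd_neg).mpr hdvd
      simpa using this
    have h2 : p ∣ 2*m := Int.ofNat_dvd.mp h1
    have := Nat.le_of_dvd (by positivity) h2
    omega
  have hne0 : (((-2*(m:ℤ) : ℤ)) : ZMod p) ≠ 0 := by
    rw [Ne, ZMod.intCast_zmod_eq_zero_iff_dvd]
    exact hndvd
  have hsq : IsSquare (((-2*(m:ℤ) : ℤ)) : ZMod p) := (legendreSym.eq_one_iff p hne0).mp hleg
  obtain ⟨s, hs⟩ := hsq
  set t : ℤ := (s.val : ℤ) with ht
  have hts : ((t : ℤ) : ZMod p) = s := by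
    rw [ht]
    push_cast
    exact ZMod.natCast_rightInverse s
  have hpt : (p:ℤ) ∣ t^2 + 2*m := by
    have h0 : ((t^2 + 2*(m:ℤ) : ℤ) : ZMod p) = 0 := by
      push_cast
      rw [sq, hts, ← hs]
      push_cast
      ring
    exact (ZMod.intCast_zmod_eq_zero_iff_dvd _ p).mp h0
  obtain ⟨β, hβeven, hpβ⟩ : ∃ β : ℤ, Even β ∧ (p:ℤ) ∣ β^2 + 2*m := by
    rcases Int.even_or_odd t with he | ho
    · exact ⟨t, he, hpt⟩
    · refine ⟨t + p, ?_, ?_⟩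
      · exact Odd.add_odd ho (Odd.natCast hpodd)
      · have he : (t+(p:ℤ))^2 + 2*m = (t^2 + 2*m) + (p:ℤ)*(2*t + p) := by ring
        rw [he]
        exact dvd_add hpt (dvd_mul_right _ _)
  have h2β : (2:ℤ) ∣ β^2 + 2*m := by
    obtain ⟨k, hk⟩ := hβeven
    exact ⟨k*β + m, by rw [hk]; ring⟩
  have h2pdvd : (2*(p:ℤ)) ∣ β^2 + 2*m := by
    have hcop : IsCoprime (2:ℤ) (p:ℤ) := by
      have : Nat.Coprime 2 p := Nat.coprime_two_left.mpr hpodd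
      exact_mod_cast Nat.Coprime.isCoprime this
    exact hcop.mul_dvd h2β hpβ
  set γ : ℤ := (β^2 + 2*m) / (2*p) with hγ
  have h2pγ : 2*(p:ℤ)*γ = β^2 + 2*m := by rw [hγ]; exact Int.mul_ediv_cancel' h2pdvd
  set a2 : ℤ := (2*(p:ℤ)+1) / m with ha2
  have hma : (m:ℤ)*a2 = 2*p+1 := by rw [ha2]; exact Int.mul_ediv_cancel' hdvd2p1
  set c : ℤ := a2*γ - 2 with hc
  have hmc : (m:ℤ)*c = γ + β^2 := by rw [hc]; linear_combination γ*hma + h2pγ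
  set G : Matrix (Fin 3) (Fin 3) ℤ := !![(m:ℤ), 1, -β; 1, a2, 0; -β, 0, c] with hG
  have hm0 : (1:ℤ) ≤ (m:ℤ) := by exact_mod_cast Nat.one_le_iff_ne_zero.mpr (by omega)
  have hp0 : (1:ℤ) ≤ (p:ℤ) := by exact_mod_cast hppos
  have hsym : Gᵀ = G := by
    rw [hG]; ext i j; fin_cases i <;> fin_cases j <;> rfl
  have hdet : G.det = 2 := by
    have hmne : (m:ℤ) ≠ 0 := by linarith
    have hdval : G.det = (m:ℤ)*a2*c - c - a2*β^2 := by
      rw [hG, Matrix.det_fin_three]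
      simp
      ring
    rw [hdval]
    apply mul_left_cancel₀ hmne
    linear_combination ((m:ℤ)*c - β^2)*hma + (2*(p:ℤ))*hmc + h2pγ
  have hpos : ∀ v : Fin 3 → ℤ, v ≠ 0 → 1 ≤ qf G v := by
    intro v hv
    have hid : 2*(p:ℤ)*m * qf G ![v 0, v 1, v 2]
        = 2*p*((m:ℤ)*(v 0) + v 1 - β*(v 2))^2 + (2*p*(v 1) + β*(v 2))^2 + 2*m*(v 2)^2 := by
      rw [qf_exp, hG]
      simp
      linear_combination (2*(p:ℤ)*(v 1)^2)*hma + (2*(p:ℤ)*(v 2)^2)*hmc + ((v 2)^2)*h2pγ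
    by_contra hle
    push_neg at hle
    have hle' : qf G ![v 0, v 1, v 2] ≤ 0 := by rw [vec3_eta]; omega
    have hsum : 2*(p:ℤ)*((m:ℤ)*(v 0) + v 1 - β*(v 2))^2 + (2*(p:ℤ)*(v 1) + β*(v 2))^2
        + 2*(m:ℤ)*(v 2)^2 ≤ 0 := by
      rw [← hid]
      have hpm0 : (0:ℤ) ≤ 2*(p:ℤ)*(m:ℤ) := by positivity
      exact mul_nonpos_iff.mpr (Or.inl ⟨hpm0, hle'⟩)
    obtain ⟨hx, hy, hz⟩ := aux5 (p:ℤ) (m:ℤ) (v 0) (v 1) (v 2) β hp0 hm0 hsum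
    apply hv
    funext i; fin_cases i <;> simpa [hx, hy, hz]
  obtain ⟨α, β', γ', hrep⟩ := CL G hsym hdet hpos
  refine ⟨α, β', γ', ?_⟩
  rw [← hrep, hG]
  rfl

private lemma odd_sq (w : ℤ) (h : Odd w) : ∃ j, w^2 = 8*j + 1 := by
  obtain ⟨k, rfl⟩ := h
  obtain ⟨e, he⟩ := Int.even_mul_succ_self k
  exact ⟨e, by linear_combination 4*he⟩

private lemma parity_core (N : ℕ) (hZ : (N:ℤ) % 8 = 7) (α b γ : ℤ)
    (hα : Odd α) (h : (N:ℤ) = α^2 + (b+b)^2 + 2*γ^2) :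
    ∃ A B C : ℤ, Odd A ∧ Odd B ∧ Odd C ∧ (N:ℤ) = A^2 + 2*B^2 + 4*C^2 := by
  obtain ⟨j1, hj1⟩ := odd_sq α hα
  rcases Int.even_or_odd γ with hγ | hγ
  · exfalso
    obtain ⟨g, rfl⟩ := hγ
    rcases Int.even_or_odd b with hb | hb
    · obtain ⟨u, rfl⟩ := hb
      obtain ⟨J, hJ⟩ : ∃ J, (N:ℤ) = 8*J + 1 :=
        ⟨j1 + 2*u^2 + g^2, by rw [h]; linear_combination hj1⟩
      omega
    · obtain ⟨j4, hj4⟩ := odd_sq b hb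
      obtain ⟨J, hJ⟩ : ∃ J, (N:ℤ) = 8*J + 5 :=
        ⟨j1 + 4*j4 + g^2, by rw [h]; linear_combination hj1 + 4*hj4⟩
      omega
  · obtain ⟨j3, hj3⟩ := odd_sq γ hγ
    rcases Int.even_or_odd b with hb | hb
    · exfalso
      obtain ⟨u, rfl⟩ := hb
      obtain ⟨J, hJ⟩ : ∃ J, (N:ℤ) = 8*J + 3 :=
        ⟨j1 + 2*j3 + 2*u^2, by rw [h]; linear_combination hj1 + 2*hj3⟩
      omega
    · refine ⟨α, γ, b, hα, hγ, hb, ?_⟩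
      rw [h]; ring

private lemma parity_full (N : ℕ) (hN : N % 8 = 7) (α β γ : ℤ)
    (h : (N:ℤ) = α^2 + β^2 + 2*γ^2) :
    ∃ A B C : ℤ, Odd A ∧ Odd B ∧ Odd C ∧ (N:ℤ) = A^2 + 2*B^2 + 4*C^2 := by
  have hZ : (N:ℤ) % 8 = 7 := by
    have := congrArg (Nat.cast : ℕ → ℤ) hN
    push_cast at this
    omega
  rcases Int.even_or_odd α with hα | hα <;> rcases Int.even_or_odd β with hβ | hβ
  · exfalso
    obtain ⟨a', rfl⟩ := hα
    obtain ⟨b', rfl⟩ := hβ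
    obtain ⟨K, hK⟩ : ∃ K, (N:ℤ) = 2*K :=
      ⟨2*a'^2 + 2*b'^2 + γ^2, by rw [h]; ring⟩
    omega
  · obtain ⟨a', rfl⟩ := hα
    exact parity_core N hZ β a' γ hβ (by linear_combination h)
  · obtain ⟨b', rfl⟩ := hβ
    exact parity_core N hZ α b' γ hα (by linear_combination h)
  · exfalso
    obtain ⟨j1, hj1⟩ := odd_sq α hα
    obtain ⟨j2, hj2⟩ := odd_sq β hβ
    rcases Int.even_or_odd γ with hγ | hγ
    · obtain ⟨g, rfl⟩ := hγ
      obtain ⟨J, hJ⟩ : ∃ J, (N:ℤ) = 8*J + 2 :=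
        ⟨j1 + j2 + g^2, by rw [h]; linear_combination hj1 + hj2⟩
      omega
    · obtain ⟨j3, hj3⟩ := odd_sq γ hγ
      obtain ⟨J, hJ⟩ : ∃ J, (N:ℤ) = 8*J + 4 :=
        ⟨j1 + j2 + 2*j3, by rw [h]; linear_combination hj1 + hj2 + 2*hj3⟩
      omega

private lemma odd_sq_T (a : ℕ) (ha : Odd a) : ∃ x : ℕ, a^2 = 8 * T x + 1 := by
  obtain ⟨x, rfl⟩ := ha
  refine ⟨x, ?_⟩
  have h2 : 2 ∣ x*(x+1) := (Nat.even_mul_succ_self x).two_dvd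
  have h1 : 2 * T x = x*(x+1) := by
    unfold T
    exact Nat.mul_div_cancel' h2
  nlinarith [h1]

theorem liouville_1_2_4 (n : ℕ) : ∃ x y z : ℕ, n = T x + 2 * T y + 4 * T z := by
  set N : ℕ := 8*n + 7 with hNdef
  have hN7 : N % 8 = 7 := by omega
  obtain ⟨α, β, γ, hrep⟩ := sqfree_rep N hN7
  obtain ⟨A, B, C, hA, hB, hC, hN⟩ := parity_full N hN7 α β γ hrep
  have ha : Odd A.natAbs := Int.natAbs_odd.mpr hA
  have hb : Odd B.natAbs := Int.natAbs_odd.mpr hB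
  have hc : Odd C.natAbs := Int.natAbs_odd.mpr hC
  have hnat : N = A.natAbs^2 + 2*B.natAbs^2 + 4*C.natAbs^2 := by
    have h1 : ((A.natAbs:ℤ))^2 = A^2 := by rw [Int.natAbs_sq]  -- may need fix
    have h2 : ((B.natAbs:ℤ))^2 = B^2 := by rw [Int.natAbs_sq]
    have h3 : ((C.natAbs:ℤ))^2 = C^2 := by rw [Int.natAbs_sq]
    have : (N:ℤ) = (A.natAbs:ℤ)^2 + 2*(B.natAbs:ℤ)^2 + 4*(C.natAbs:ℤ)^2 := by
      rw [h1, h2, h3]; exact hN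
    exact_mod_cast this
  obtain ⟨x, hx⟩ := odd_sq_T A.natAbs ha
  obtain ⟨y, hy⟩ := odd_sq_T B.natAbs hb
  obtain ⟨z, hz⟩ := odd_sq_T C.natAbs hc
  refine ⟨x, y, z, ?_⟩
  rw [hx, hy, hz] at hnat
  omega
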